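/- Let p, q : ℝ → EuclideanSpace ℝ (Fin 2) be differentiable at t ∈ ℝ, set r = q(t) − p(t), d = ‖r‖, w = p'(t) − q'(t), and let d_min satisfy 0 < d_min ≤ d. If w ≠ 0 and arccos(⟪w, r⟫ / (‖w‖ · d)) ≥ arcsin(d_min / d), then the derivative at t of the separation distance s ↦ ‖q(s) − p(s)‖ is at least −(‖w‖ / d) · √(d² − d_min²). (Inequality (16) in the proof of the paper's Lemma 2.) -/

import Mathlib

open scoped RealInnerProductSpace

/-- Inequality (16) in the proof of the paper's Lemma 2: if the relative velocity
lies outside the collision cone, then the separation distance decreases no faster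
than `−(‖w‖/d)·√(d² − d_min²)`. -/
theorem separation_rate_bound
    (p q : ℝ → EuclideanSpace ℝ (Fin 2)) (t : ℝ)
    (hp : DifferentiableAt ℝ p t) (hq : DifferentiableAt ℝ q t)
    (d_min : ℝ) (hd_min : 0 < d_min) (hle : d_min ≤ ‖q t - p t‖)
    (hw : deriv p t - deriv q t ≠ 0)
    (h_cone : Real.arccos (⟪deriv p t - deriv q t, q t - p t⟫ /
        (‖deriv p t - deriv q t‖ * ‖q t - p t‖)) ≥
      Real.arcsin (d_min / ‖q t - p t‖)) :
    deriv (fun s => ‖q s - p s‖) t ≥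
      -(‖deriv p t - deriv q t‖ / ‖q t - p t‖) *
        Real.sqrt (‖q t - p t‖ ^ 2 - d_min ^ 2) := by
  set r := q t - p t with hr
  set w := deriv p t - deriv q t with hwdef
  set d := ‖r‖ with hd'
  have hd : 0 < d := lt_of_lt_of_le hd_min hle
  have hwn : 0 < ‖w‖ := norm_pos_iff.mpr hw
  -- derivative computation
  have hf : HasDerivAt (fun s => q s - p s) (-w) t := by
    have := (hq.hasDerivAt.sub hp.hasDerivAt)
    rw [hwdef, neg_sub]
    exact this
  have hinner : HasDerivAt (fun s => ⟪q s - p s, q s - p s⟫) (⟪r, -w⟫ + ⟪-w, r⟫) t :=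
    hf.inner ℝ hf
  have hrr : ⟪r, r⟫ ≠ 0 := by
    rw [real_inner_self_eq_norm_mul_norm]
    positivity
  have hsqrt : HasDerivAt (fun s => Real.sqrt ⟪q s - p s, q s - p s⟫)
      ((⟪r, -w⟫ + ⟪-w, r⟫) / (2 * Real.sqrt ⟪r, r⟫)) t := hinner.sqrt hrr
  have heq : (fun s => ‖q s - p s‖) = fun s => Real.sqrt ⟪q s - p s, q s - p s⟫ := by
    funext s
    rw [real_inner_self_eq_norm_mul_norm, Real.sqrt_mul_self (norm_nonneg _)]
  have hds : Real.sqrt ⟪r, r⟫ = d := by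
    rw [real_inner_self_eq_norm_mul_norm, Real.sqrt_mul_self (norm_nonneg _)]
  have hderiv : deriv (fun s => ‖q s - p s‖) t = -⟪w, r⟫ / d := by
    rw [heq, hsqrt.deriv, hds]
    rw [inner_neg_right, inner_neg_left, real_inner_comm r w]
    ring
  rw [hderiv]
  -- key inequality
  set s := d_min / d with hs
  have hs0 : 0 < s := div_pos hd_min hd
  have hs1 : s ≤ 1 := (div_le_one hd).mpr hle
  set c := ⟪w, r⟫ / (‖w‖ * d) with hc
  have hcabs : |c| ≤ 1 := abs_real_inner_div_norm_mul_norm_le_one w r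
  have hcos : Real.cos (Real.arccos c) ≤ Real.cos (Real.arcsin s) := by
    apply Real.cos_le_cos_of_nonneg_of_le_pi (Real.arcsin_nonneg.mpr hs0.le)
      (Real.arccos_le_pi c) h_cone
  rw [Real.cos_arccos (neg_le_of_abs_le hcabs) (le_of_abs_le hcabs), Real.cos_arcsin] at hcos
  -- √(d² − d_min²) = d * √(1 − s²)
  have hsq : Real.sqrt (d ^ 2 - d_min ^ 2) = d * Real.sqrt (1 - s ^ 2) := by
    rw [← Real.sqrt_sq hd.le, ← Real.sqrt_mul (sq_nonneg d)]
    congr 1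
    rw [hs]
    field_simp
    rw [Real.sq_sqrt (sq_nonneg d)]
  have key : ⟪w, r⟫ ≤ ‖w‖ * Real.sqrt (d ^ 2 - d_min ^ 2) := by
    have : ⟪w, r⟫ = c * (‖w‖ * d) := by
      rw [hc, div_mul_cancel₀ _ (mul_pos hwn hd).ne']
    rw [this, hsq]
    have h2 := mul_le_mul_of_nonneg_right hcos (by positivity : (0:ℝ) ≤ ‖w‖ * d)
    nlinarith [Real.sqrt_nonneg (1 - s ^ 2)]
  rw [ge_iff_le, show -(‖w‖ / d) * Real.sqrt (d ^ 2 - d_min ^ 2)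
      = -(‖w‖ * Real.sqrt (d ^ 2 - d_min ^ 2)) / d by ring, ]
  exact (div_le_div_iff_of_pos_right hd).mpr (by linarith)
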